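/- Let R be a UFD and (p₁,p₂,Q₁,Q₂) a reduced quadruplet with F(x,y) = p₂·y + Q₂(p₁·x + Q₁(y)) ∈ R[x,y]. Then p₂ ∈ R if and only if Q₂ ∈ R[y]. -/

import Mathlib

open MvPolynomial

lemma map_paeval {S T : Type*} [CommRing S] [CommRing T] (ψ : S →+* T)
    {σ : Type*} (g : MvPolynomial σ S) (P : Polynomial S) :
    MvPolynomial.map ψ (Polynomial.aeval g P)
      = Polynomial.aeval (MvPolynomial.map ψ g) (P.map ψ) := by
  induction P using Polynomial.induction_on' with
  | add p q hp hq => simp [hp, hq]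
  | monomial n a =>
      simp [Polynomial.aeval_monomial, MvPolynomial.algebraMap_eq]

lemma aeval_CX (S : Type*) [CommRing S] (q : Polynomial S) :
    Polynomial.aeval (Polynomial.C (Polynomial.X) : Polynomial (Polynomial S)) q
      = Polynomial.C q := by
  induction q using Polynomial.induction_on' with
  | add p q hp hq => simp [hp, hq]
  | monomial n a =>
      rw [Polynomial.aeval_monomial, Polynomial.algebraMap_apply, Polynomial.algebraMap_eq,
        ← Polynomial.C_pow, ← Polynomial.C_mul, Polynomial.C_mul_X_pow_eq_monomial]

lemma aeval_as_comp {S : Type*} [CommRing S] (q : Polynomial (Polynomial S)) (P : Polynomial S) :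
    Polynomial.aeval q P = (P.map (Polynomial.C : S →+* Polynomial S)).comp q := by
  rw [Polynomial.comp, Polynomial.eval₂_map, Polynomial.aeval_def]
  congr 1

lemma core_inj {S : Type*} [CommRing S] [IsDomain S] (s : S) (h : Polynomial S)
    (hs : s ≠ 0 ∨ (h ≠ 0 ∧ h.coeff 0 = 0)) (P : Polynomial S)
    (hP : Polynomial.aeval ((MvPolynomial.C s * MvPolynomial.X 0
        + Polynomial.aeval (MvPolynomial.X 1) h : MvPolynomial (Fin 2) S)) P = 0) :
    P = 0 := by
  set ε : MvPolynomial (Fin 2) S →ₐ[S] Polynomial (Polynomial S) :=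
    MvPolynomial.aeval ![Polynomial.X, Polynomial.C Polynomial.X] with hε
  have e1 : ε (Polynomial.aeval (MvPolynomial.X 1) h) = Polynomial.C h := by
    rw [← Polynomial.aeval_algHom_apply]
    simp [hε, aeval_CX]
  have e2 : ε (MvPolynomial.C s * MvPolynomial.X 0 + Polynomial.aeval (MvPolynomial.X 1) h)
      = Polynomial.C (Polynomial.C s) * Polynomial.X + Polynomial.C h := by
    rw [map_add, map_mul, e1]
    simp [hε, MvPolynomial.algebraMap_eq, Polynomial.algebraMap_apply, Polynomial.algebraMap_eq]
  set q : Polynomial (Polynomial S) :=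
    Polynomial.C (Polynomial.C s) * Polynomial.X + Polynomial.C h with hq
  have key : Polynomial.aeval q P = 0 := by
    have := congrArg (fun z : MvPolynomial (Fin 2) S => ε z) hP
    simp only [map_zero] at this
    rw [← Polynomial.aeval_algHom_apply, e2] at this
    exact this
  rw [aeval_as_comp] at key
  have hq0 : q.coeff 0 = h := by simp [hq]
  have hq1 : q.coeff 1 = Polynomial.C s := by simp [hq, Polynomial.coeff_C]
  rcases Polynomial.comp_eq_zero_iff.mp key with h0 | ⟨heval, hqc⟩
  · exact (Polynomial.map_eq_zero_iff Polynomial.C_injective).mp h0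
  · have hs0 : s = 0 := by
      have := congrArg (fun r => Polynomial.coeff r 1) hqc
      simp [hq1, Polynomial.coeff_C] at this
      exact this
    rcases hs with hne | ⟨hhne, hh0⟩
    · exact absurd hs0 hne
    · have hcomp : P.comp h = 0 := by
        rw [Polynomial.comp, ← Polynomial.eval_map]
        rw [hq0] at heval
        exact heval
      rcases Polynomial.comp_eq_zero_iff.mp hcomp with h0 | ⟨_, hhc⟩
      · exact h0
      · rw [hh0, Polynomial.C_0] at hhc
        exact absurd hhc hhne

/-- For a reduced quadruplet `(p₁,p₂,Q₁,Q₂)` over a UFD `R` with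
`F = p₂y + Q₂(p₁x+Q₁(y)) ∈ R[x,y]`, we have `p₂ ∈ R` iff `Q₂ ∈ R[y]`. -/
theorem reduced_quadruplet_p₂_in_ring_iff (R : Type*) [CommRing R] [IsDomain R]
    [UniqueFactorizationMonoid R]
    (p₁ p₂ : FractionRing R) (Q₁ Q₂ : Polynomial (FractionRing R))
    (hp₁ : p₁ ≠ 0) (hp₂ : p₂ ≠ 0)
    (hd₁ : 1 ≤ Q₁.natDegree) (hd₂ : 2 ≤ Q₂.natDegree)
    (h₁0 : Q₁.eval 0 = 0) (h₂0 : Q₂.eval 0 = 0)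
    (r₁ : R) (hr₁ : algebraMap R (FractionRing R) r₁ = p₁)
    (P₁ : Polynomial R) (hP₁ : P₁.map (algebraMap R (FractionRing R)) = Q₁)
    (hgcd : ∀ t : R, t ∣ r₁ → (∀ i, t ∣ P₁.coeff i) → IsUnit t)
    (F₀ : MvPolynomial (Fin 2) R)
    (hF₀ : MvPolynomial.map (algebraMap R (FractionRing R)) F₀ =
      C p₂ * X 1 + Polynomial.aeval (C p₁ * X 0 + Polynomial.aeval (X 1) Q₁) Q₂) :
    (∃ r : R, algebraMap R (FractionRing R) r = p₂) ↔
      (∃ P₂ : Polynomial R, P₂.map (algebraMap R (FractionRing R)) = Q₂) := by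
  have hf : Function.Injective (algebraMap R (FractionRing R)) :=
    IsFractionRing.injective R (FractionRing R)
  have hu0 : ∀ (u₀ : Polynomial R),
      MvPolynomial.map (algebraMap R (FractionRing R))
        (C r₁ * X 0 + Polynomial.aeval (X 1) u₀ : MvPolynomial (Fin 2) R)
      = C p₁ * X 0 + Polynomial.aeval (X 1) (u₀.map (algebraMap R (FractionRing R))) := by
    intro u₀
    rw [map_add, map_mul, MvPolynomial.map_C, hr₁, MvPolynomial.map_X, map_paeval,
      MvPolynomial.map_X]
  constructor
  · rintro ⟨r₂, hr₂⟩
    have hG : MvPolynomial.map (algebraMap R (FractionRing R)) (F₀ - C r₂ * X 1)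
        = Polynomial.aeval (C p₁ * X 0 + Polynomial.aeval (X 1) Q₁) Q₂ := by
      rw [map_sub, hF₀, map_mul, MvPolynomial.map_C, hr₂, MvPolynomial.map_X]
      ring
    have key : ∀ d : R, d ≠ 0 →
        (∃ P : Polynomial R, P.map (algebraMap R (FractionRing R))
          = Polynomial.C (algebraMap R (FractionRing R) d) * Q₂) →
        ∃ P₂ : Polynomial R, P₂.map (algebraMap R (FractionRing R)) = Q₂ := by
      intro d
      induction d using UniqueFactorizationMonoid.induction_on_prime with
      | h₁ => intro hd _; exact absurd rfl hd
      | h₂ x hx =>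
          rintro - ⟨P, hP⟩
          obtain ⟨v, hv⟩ := hx.exists_left_inv
          refine ⟨Polynomial.C v * P, ?_⟩
          rw [Polynomial.map_mul, Polynomial.map_C, hP, ← mul_assoc, ← Polynomial.C_mul,
            ← map_mul, hv, map_one, Polynomial.C_1, one_mul]
      | h₃ a p ha hp IH =>
          rintro - ⟨P, hP⟩
          set u : MvPolynomial (Fin 2) R := C r₁ * X 0 + Polynomial.aeval (X 1) P₁ with hu_def
          have hu : MvPolynomial.map (algebraMap R (FractionRing R)) u
              = C p₁ * X 0 + Polynomial.aeval (X 1) Q₁ := by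
            rw [hu_def, hu0 P₁, hP₁]
          have hRid : C (p * a) * (F₀ - C r₂ * X 1) = Polynomial.aeval u P := by
            apply MvPolynomial.map_injective _ hf
            rw [map_mul, MvPolynomial.map_C, hG, map_paeval, hu, hP]
            simp [Polynomial.aeval_C, MvPolynomial.algebraMap_eq, map_mul]
          haveI hpr : (Ideal.span {p} : Ideal R).IsPrime :=
            (Ideal.span_singleton_prime hp.ne_zero).mpr hp
          set φ := Ideal.Quotient.mk (Ideal.span {p} : Ideal R) with hφ
          have hdvd : ∀ i, p ∣ P.coeff i := by
            have h0 : φ (p * a) = 0 :=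
              Ideal.Quotient.eq_zero_iff_mem.mpr (Ideal.mem_span_singleton.mpr ⟨a, rfl⟩)
            have hq := congrArg
              (fun z : MvPolynomial (Fin 2) R => MvPolynomial.map φ z) hRid
            rw [map_mul, MvPolynomial.map_C, h0, MvPolynomial.C_0, zero_mul, map_paeval] at hq
            have hu' : MvPolynomial.map φ
                (C r₁ * X 0 + Polynomial.aeval (X 1) P₁ : MvPolynomial (Fin 2) R)
                = C (φ r₁) * X 0 + Polynomial.aeval (X 1) (P₁.map φ) := by
              rw [map_add, map_mul, MvPolynomial.map_C, MvPolynomial.map_X, map_paeval,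
                MvPolynomial.map_X]
            rw [hu'] at hq
            have hP10 : (P₁.map φ).coeff 0 = 0 := by
              have h00 : P₁.coeff 0 = 0 := by
                apply hf
                rw [map_zero, ← Polynomial.coeff_map, hP₁, Polynomial.coeff_zero_eq_eval_zero, h₁0]
              rw [Polynomial.coeff_map, h00, map_zero]
            have hcase : φ r₁ ≠ 0 ∨ ((P₁.map φ) ≠ 0 ∧ (P₁.map φ).coeff 0 = 0) := by
              by_cases hr : φ r₁ = 0
              · right
                refine ⟨?_, hP10⟩
                have hpd : p ∣ r₁ := Ideal.mem_span_singleton.mp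
                  (Ideal.Quotient.eq_zero_iff_mem.mp hr)
                have hnall : ¬ ∀ i, p ∣ P₁.coeff i := fun hall => hp.not_unit (hgcd p hpd hall)
                push_neg at hnall
                obtain ⟨i, hi⟩ := hnall
                intro hzero
                apply hi
                have hz : (P₁.map φ).coeff i = 0 := by rw [hzero]; simp
                rw [Polynomial.coeff_map] at hz
                exact Ideal.mem_span_singleton.mp (Ideal.Quotient.eq_zero_iff_mem.mp hz)
              · exact Or.inl hr
            have hP0 : P.map φ = 0 := core_inj (φ r₁) (P₁.map φ) hcase (P.map φ) hq.symm
            intro i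
            have hz : φ (P.coeff i) = 0 := by
              rw [← Polynomial.coeff_map, hP0, Polynomial.coeff_zero]
            exact Ideal.mem_span_singleton.mp (Ideal.Quotient.eq_zero_iff_mem.mp hz)
          obtain ⟨P', rfl⟩ := (Polynomial.C_dvd_iff_dvd_coeff p P).mpr hdvd
          apply IH ha
          refine ⟨P', ?_⟩
          have hfp : (Polynomial.C (algebraMap R (FractionRing R) p)
              : Polynomial (FractionRing R)) ≠ 0 := by
            simp only [ne_eq, Polynomial.C_eq_zero]
            intro hh
            exact hp.ne_zero (hf (by rw [hh, map_zero]))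
          apply mul_left_cancel₀ hfp
          have hPP := hP
          rw [Polynomial.map_mul, Polynomial.map_C] at hPP
          rw [hPP, map_mul, Polynomial.C_mul, mul_assoc]
    obtain ⟨b, hb⟩ := IsLocalization.integerNormalization_map_to_map (nonZeroDivisors R) Q₂
    refine key (b : R) (nonZeroDivisors.coe_ne_zero b)
      ⟨IsLocalization.integerNormalization (nonZeroDivisors R) Q₂, ?_⟩
    rw [hb, ← algebraMap_smul (FractionRing R) (b : R) Q₂, Polynomial.smul_eq_C_mul]
  · rintro ⟨P₂, hP₂⟩
    refine ⟨(F₀ - Polynomial.aeval (C r₁ * X 0 + Polynomial.aeval (X 1) P₁) P₂).coeff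
      (Finsupp.single 1 1), ?_⟩
    have hh : MvPolynomial.map (algebraMap R (FractionRing R))
        (F₀ - Polynomial.aeval (C r₁ * X 0 + Polynomial.aeval (X 1) P₁) P₂)
        = C p₂ * X 1 := by
      rw [map_sub, hF₀, map_paeval, hu0 P₁, hP₁, hP₂]
      ring
    have hco := congrArg
      (fun g : MvPolynomial (Fin 2) (FractionRing R) => MvPolynomial.coeff (Finsupp.single 1 1) g) hh
    simp only [MvPolynomial.coeff_map] at hco
    rw [hco]
    simp [MvPolynomial.coeff_C_mul, MvPolynomial.coeff_X]
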